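/- Let (W, h, ε) be a 3-dimensional oriented real inner product space and ξ ∈ W* a covector. The linear map on the 9-dimensional complex space of (0,2)-tensors given by E_{kl} ↦ i ξ_m ε^{m(l}{}_{(i} δ_{j)}{}^{k)} E_{kl} is diagonalizable with eigenvalues 0, ±|ξ|/2, ±|ξ| where |ξ| = (h^{ij} ξ_i ξ_j)^{1/2}; the eigenvalue 0 has a 5-dimensional eigenspace and each of the eigenvalues ±|ξ|/2, ±|ξ| has a 1-dimensional eigenspace. -/
import Mathlib


noncomputable section

/-- The 9-dimensional complex vector space of (0,2)-tensors on a 3-dimensional oriented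
real inner product space, in components w.r.t. an oriented orthonormal basis. -/
abbrev Tens2 := Fin 3 → Fin 3 → ℂ

/-- Sign of the ordered pair `(x, y)`. -/
def sgnF {n : ℕ} (x y : Fin n) : ℤ := if x < y then 1 else if y < x then -1 else 0

/-- Levi-Civita symbol (the orientation form in an oriented orthonormal basis). -/
def eps3 (a b c : Fin 3) : ℂ := ((sgnF a b * sgnF a c * sgnF b c : ℤ) : ℂ)

/-- Kronecker delta. -/
def kd (a b : Fin 3) : ℂ := if a = b then 1 else 0

/-! ### Auxiliary machinery -/

/-- The "cross product" matrix `K a b = ∑ m, ξ m * ε_{m b a}`. -/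
def Km (ξ : Fin 3 → ℝ) (a b : Fin 3) : ℂ := ∑ m, (ξ m : ℂ) * eps3 m b a

@[simp] lemma eps_000 : eps3 0 0 0 = 0 := by norm_num [eps3, sgnF, Fin.lt_def]
@[simp] lemma eps_001 : eps3 0 0 1 = 0 := by norm_num [eps3, sgnF, Fin.lt_def]
@[simp] lemma eps_002 : eps3 0 0 2 = 0 := by norm_num [eps3, sgnF, Fin.lt_def]
@[simp] lemma eps_010 : eps3 0 1 0 = 0 := by norm_num [eps3, sgnF, Fin.lt_def]
@[simp] lemma eps_011 : eps3 0 1 1 = 0 := by norm_num [eps3, sgnF, Fin.lt_def]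
@[simp] lemma eps_012 : eps3 0 1 2 = 1 := by norm_num [eps3, sgnF, Fin.lt_def]
@[simp] lemma eps_020 : eps3 0 2 0 = 0 := by norm_num [eps3, sgnF, Fin.lt_def]
@[simp] lemma eps_021 : eps3 0 2 1 = -1 := by norm_num [eps3, sgnF, Fin.lt_def]
@[simp] lemma eps_022 : eps3 0 2 2 = 0 := by norm_num [eps3, sgnF, Fin.lt_def]
@[simp] lemma eps_100 : eps3 1 0 0 = 0 := by norm_num [eps3, sgnF, Fin.lt_def]
@[simp] lemma eps_101 : eps3 1 0 1 = 0 := by norm_num [eps3, sgnF, Fin.lt_def]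
@[simp] lemma eps_102 : eps3 1 0 2 = -1 := by norm_num [eps3, sgnF, Fin.lt_def]
@[simp] lemma eps_110 : eps3 1 1 0 = 0 := by norm_num [eps3, sgnF, Fin.lt_def]
@[simp] lemma eps_111 : eps3 1 1 1 = 0 := by norm_num [eps3, sgnF, Fin.lt_def]
@[simp] lemma eps_112 : eps3 1 1 2 = 0 := by norm_num [eps3, sgnF, Fin.lt_def]
@[simp] lemma eps_120 : eps3 1 2 0 = 1 := by norm_num [eps3, sgnF, Fin.lt_def]
@[simp] lemma eps_121 : eps3 1 2 1 = 0 := by norm_num [eps3, sgnF, Fin.lt_def]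
@[simp] lemma eps_122 : eps3 1 2 2 = 0 := by norm_num [eps3, sgnF, Fin.lt_def]
@[simp] lemma eps_200 : eps3 2 0 0 = 0 := by norm_num [eps3, sgnF, Fin.lt_def]
@[simp] lemma eps_201 : eps3 2 0 1 = 1 := by norm_num [eps3, sgnF, Fin.lt_def]
@[simp] lemma eps_202 : eps3 2 0 2 = 0 := by norm_num [eps3, sgnF, Fin.lt_def]
@[simp] lemma eps_210 : eps3 2 1 0 = -1 := by norm_num [eps3, sgnF, Fin.lt_def]
@[simp] lemma eps_211 : eps3 2 1 1 = 0 := by norm_num [eps3, sgnF, Fin.lt_def]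
@[simp] lemma eps_212 : eps3 2 1 2 = 0 := by norm_num [eps3, sgnF, Fin.lt_def]
@[simp] lemma eps_220 : eps3 2 2 0 = 0 := by norm_num [eps3, sgnF, Fin.lt_def]
@[simp] lemma eps_221 : eps3 2 2 1 = 0 := by norm_num [eps3, sgnF, Fin.lt_def]
@[simp] lemma eps_222 : eps3 2 2 2 = 0 := by norm_num [eps3, sgnF, Fin.lt_def]
@[simp] lemma kd_00 : kd 0 0 = 1 := by norm_num [kd, Fin.ext_iff]
@[simp] lemma kd_01 : kd 0 1 = 0 := by norm_num [kd, Fin.ext_iff]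
@[simp] lemma kd_02 : kd 0 2 = 0 := by norm_num [kd, Fin.ext_iff]
@[simp] lemma kd_10 : kd 1 0 = 0 := by norm_num [kd, Fin.ext_iff]
@[simp] lemma kd_11 : kd 1 1 = 1 := by norm_num [kd, Fin.ext_iff]
@[simp] lemma kd_12 : kd 1 2 = 0 := by norm_num [kd, Fin.ext_iff]
@[simp] lemma kd_20 : kd 2 0 = 0 := by norm_num [kd, Fin.ext_iff]
@[simp] lemma kd_21 : kd 2 1 = 0 := by norm_num [kd, Fin.ext_iff]
@[simp] lemma kd_22 : kd 2 2 = 1 := by norm_num [kd, Fin.ext_iff]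
@[simp] lemma Km_00 (ξ : Fin 3 → ℝ) : Km ξ 0 0 = 0 := by norm_num [Km, Fin.sum_univ_three]
@[simp] lemma Km_01 (ξ : Fin 3 → ℝ) : Km ξ 0 1 = -(ξ 2 : ℂ) := by norm_num [Km, Fin.sum_univ_three]
@[simp] lemma Km_02 (ξ : Fin 3 → ℝ) : Km ξ 0 2 = (ξ 1 : ℂ) := by norm_num [Km, Fin.sum_univ_three]
@[simp] lemma Km_10 (ξ : Fin 3 → ℝ) : Km ξ 1 0 = (ξ 2 : ℂ) := by norm_num [Km, Fin.sum_univ_three]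
@[simp] lemma Km_11 (ξ : Fin 3 → ℝ) : Km ξ 1 1 = 0 := by norm_num [Km, Fin.sum_univ_three]
@[simp] lemma Km_12 (ξ : Fin 3 → ℝ) : Km ξ 1 2 = -(ξ 0 : ℂ) := by norm_num [Km, Fin.sum_univ_three]
@[simp] lemma Km_20 (ξ : Fin 3 → ℝ) : Km ξ 2 0 = -(ξ 1 : ℂ) := by norm_num [Km, Fin.sum_univ_three]
@[simp] lemma Km_21 (ξ : Fin 3 → ℝ) : Km ξ 2 1 = (ξ 0 : ℂ) := by norm_num [Km, Fin.sum_univ_three]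
@[simp] lemma Km_22 (ξ : Fin 3 → ℝ) : Km ξ 2 2 = 0 := by norm_num [Km, Fin.sum_univ_three]

lemma fin3cases : ∀ i : Fin 3, i = 0 ∨ i = 1 ∨ i = 2 := by decide
lemma fin5cases : ∀ i : Fin 5, i = 0 ∨ i = 1 ∨ i = 2 ∨ i = 3 ∨ i = 4 := by decide

set_option maxHeartbeats 2000000 in
/-- The operator in `stmt_13`, reorganized using `Km`. -/
theorem Aform (ξ : Fin 3 → ℝ) (A : Module.End ℂ Tens2)
    (hA : ∀ (E : Tens2) (i j : Fin 3), A E i j =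
      Complex.I * ∑ m, ∑ k, ∑ l, (ξ m : ℂ) * ((1/4) *
        (eps3 m l i * kd j k + eps3 m k i * kd j l
          + eps3 m l j * kd i k + eps3 m k j * kd i l)) * E k l) :
    ∀ (E : Tens2) (i j : Fin 3), A E i j =
      (Complex.I/4) * ((∑ l, Km ξ i l * (E j l + E l j)) + ∑ l, Km ξ j l * (E i l + E l i)) := by
  intro E i j
  rw [hA]
  rcases fin3cases i with rfl|rfl|rfl <;> rcases fin3cases j with rfl|rfl|rfl <;>
    simp only [Km, Fin.sum_univ_three, Fin.isValue, eps_000, eps_001, eps_002, eps_010, eps_011,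
      eps_012, eps_020, eps_021, eps_022, eps_100, eps_101, eps_102, eps_110, eps_111, eps_112,
      eps_120, eps_121, eps_122, eps_200, eps_201, eps_202, eps_210, eps_211, eps_212, eps_220,
      eps_221, eps_222, kd_00, kd_01, kd_02, kd_10, kd_11, kd_12, kd_20, kd_21, kd_22] <;>
    ring

lemma Km_xi (ξ : Fin 3 → ℝ) : ∀ a, ∑ b, Km ξ a b * (ξ b : ℂ) = 0 := by
  intro a
  rcases fin3cases a with rfl|rfl|rfl <;>
    simp only [Fin.sum_univ_three, Km_00, Km_01, Km_02, Km_10, Km_11, Km_12, Km_20, Km_21,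
      Km_22] <;> ring

lemma Km_asym (ξ : Fin 3 → ℝ) : ∀ a b, Km ξ a b + Km ξ b a = 0 := by
  intro a b
  rcases fin3cases a with rfl|rfl|rfl <;> rcases fin3cases b with rfl|rfl|rfl <;>
    simp only [Km_00, Km_01, Km_02, Km_10, Km_11, Km_12, Km_20, Km_21, Km_22] <;> ring

/-- Existence of an eigenvector of the cross-product matrix. -/
lemma exists_eigvec (ξ : Fin 3 → ℝ) (μ : ℂ)
    (hμ : μ ^ 2 = (ξ 0 : ℂ) ^ 2 + (ξ 1 : ℂ) ^ 2 + (ξ 2 : ℂ) ^ 2) :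
    ∃ w : Fin 3 → ℂ, w ≠ 0 ∧ ∀ a, ∑ b, Km ξ a b * w b = (Complex.I * μ) * w a := by
  have hdet : (Matrix.of (fun a b => Km ξ a b) - (Complex.I * μ) • 1).det = 0 := by
    rw [Matrix.det_fin_three]
    simp only [Matrix.sub_apply, Matrix.smul_apply, Matrix.one_apply, Matrix.of_apply,
      Km_00, Km_01, Km_02, Km_10, Km_11, Km_12, Km_20, Km_21, Km_22, smul_eq_mul]
    norm_num [Fin.ext_iff]
    linear_combination (Complex.I * μ) * hμ - (Complex.I * μ^3) * Complex.I_sq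
  obtain ⟨w, hw0, hw⟩ := Matrix.exists_mulVec_eq_zero_iff.2 hdet
  refine ⟨w, hw0, ?_⟩
  intro a
  have h := congrFun hw a
  rcases fin3cases a with rfl|rfl|rfl <;>
    simp only [Matrix.mulVec, dotProduct, Fin.sum_univ_three, Matrix.sub_apply,
      Matrix.smul_apply, Matrix.one_apply, Matrix.of_apply, smul_eq_mul, Pi.zero_apply,
      Km_00, Km_01, Km_02, Km_10, Km_11, Km_12, Km_20, Km_21, Km_22] at h ⊢ <;>
    norm_num [Fin.ext_iff] at h <;> linear_combination h

section EigRelations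

variable {ξ : Fin 3 → ℝ} {A : Module.End ℂ Tens2}

/-- Antisymmetric tensors are in the kernel. -/
lemma eig_asym
    (hA' : ∀ (E : Tens2) (i j : Fin 3), A E i j =
      (Complex.I/4) * ((∑ l, Km ξ i l * (E j l + E l j)) + ∑ l, Km ξ j l * (E i l + E l i)))
    (a b : Fin 3) :
    A (fun k l => kd k a * kd l b - kd k b * kd l a) = 0 := by
  funext i j
  rw [hA']
  simp only [Fin.sum_univ_three, Pi.zero_apply]
  ring

/-- The identity tensor is in the kernel. -/
lemma eig_id
    (hA' : ∀ (E : Tens2) (i j : Fin 3), A E i j =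
      (Complex.I/4) * ((∑ l, Km ξ i l * (E j l + E l j)) + ∑ l, Km ξ j l * (E i l + E l i))) :
    A (fun k l => kd k l) = 0 := by
  funext i j
  rw [hA']
  have hkd : ∀ p q : Fin 3, (∑ l, Km ξ p l * (kd q l + kd l q)) = 2 * Km ξ p q := by
    intro p q
    rcases fin3cases q with rfl|rfl|rfl <;>
      simp only [Fin.sum_univ_three, kd_00, kd_01, kd_02, kd_10, kd_11, kd_12, kd_20, kd_21,
        kd_22] <;> ring
  rw [hkd, hkd, Pi.zero_apply, Pi.zero_apply]
  linear_combination (Complex.I/2) * Km_asym ξ i j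

/-- `ξ ⊗ ξ` is in the kernel. -/
lemma eig_xixi
    (hA' : ∀ (E : Tens2) (i j : Fin 3), A E i j =
      (Complex.I/4) * ((∑ l, Km ξ i l * (E j l + E l j)) + ∑ l, Km ξ j l * (E i l + E l i))) :
    A (fun k l => (ξ k : ℂ) * (ξ l : ℂ)) = 0 := by
  funext i j
  rw [hA']
  have hi := Km_xi ξ i
  have hj := Km_xi ξ j
  simp only [Fin.sum_univ_three] at hi hj ⊢
  rw [Pi.zero_apply, Pi.zero_apply]
  linear_combination (Complex.I/2 * (ξ j : ℂ)) * hi + (Complex.I/2 * (ξ i : ℂ)) * hj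

/-- `w ⊗ w` is an eigenvector with eigenvalue `-μ`. -/
lemma eig_ww
    (hA' : ∀ (E : Tens2) (i j : Fin 3), A E i j =
      (Complex.I/4) * ((∑ l, Km ξ i l * (E j l + E l j)) + ∑ l, Km ξ j l * (E i l + E l i)))
    {μ : ℂ} {w : Fin 3 → ℂ} (hw : ∀ a, ∑ b, Km ξ a b * w b = (Complex.I * μ) * w a) :
    A (fun k l => w k * w l) = (-μ) • (fun k l => w k * w l : Tens2) := by
  funext i j
  rw [hA']
  have hi := hw i
  have hj := hw j
  simp only [Fin.sum_univ_three] at hi hj ⊢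
  simp only [Pi.smul_apply, smul_eq_mul]
  linear_combination (Complex.I/2 * w j) * hi + (Complex.I/2 * w i) * hj
    + (μ * (w i * w j)) * Complex.I_sq

/-- `w ⊗ ξ + ξ ⊗ w` is an eigenvector with eigenvalue `-μ/2`. -/
lemma eig_wxi
    (hA' : ∀ (E : Tens2) (i j : Fin 3), A E i j =
      (Complex.I/4) * ((∑ l, Km ξ i l * (E j l + E l j)) + ∑ l, Km ξ j l * (E i l + E l i)))
    {μ : ℂ} {w : Fin 3 → ℂ} (hw : ∀ a, ∑ b, Km ξ a b * w b = (Complex.I * μ) * w a) :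
    A (fun k l => w k * (ξ l : ℂ) + (ξ k : ℂ) * w l)
      = (-(μ/2)) • (fun k l => w k * (ξ l : ℂ) + (ξ k : ℂ) * w l : Tens2) := by
  funext i j
  rw [hA']
  have hi := hw i
  have hj := hw j
  have hxi := Km_xi ξ i
  have hxj := Km_xi ξ j
  simp only [Fin.sum_univ_three] at hi hj hxi hxj ⊢
  simp only [Pi.smul_apply, smul_eq_mul]
  linear_combination (Complex.I/2 * w j) * hxi + (Complex.I/2 * (ξ j : ℂ)) * hi
    + (Complex.I/2 * w i) * hxj + (Complex.I/2 * (ξ i : ℂ)) * hj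
    + (μ/2 * (w i * (ξ j : ℂ) + (ξ i : ℂ) * w j)) * Complex.I_sq

end EigRelations

/-- The eigenvector of the cross-product matrix is orthogonal to `ξ`. -/
lemma eig_orth {ξ : Fin 3 → ℝ} {μ : ℂ} (hμ0 : μ ≠ 0) {w : Fin 3 → ℂ}
    (hw : ∀ a, ∑ b, Km ξ a b * w b = (Complex.I * μ) * w a) :
    (ξ 0 : ℂ) * w 0 + (ξ 1 : ℂ) * w 1 + (ξ 2 : ℂ) * w 2 = 0 := by
  have h0 := hw 0; have h1 := hw 1; have h2 := hw 2
  simp only [Fin.sum_univ_three, Km_00, Km_01, Km_02, Km_10, Km_11, Km_12, Km_20, Km_21,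
    Km_22] at h0 h1 h2
  have key : (Complex.I * μ) * ((ξ 0 : ℂ) * w 0 + (ξ 1 : ℂ) * w 1 + (ξ 2 : ℂ) * w 2) = 0 := by
    linear_combination -((ξ 0 : ℂ) * h0 + (ξ 1 : ℂ) * h1 + (ξ 2 : ℂ) * h2)
  have hIμ : (Complex.I * μ) ≠ 0 := mul_ne_zero Complex.I_ne_zero hμ0
  exact (mul_eq_zero.1 key).resolve_left hIμ

/-- `w ⊗ ξ + ξ ⊗ w` is nonzero. -/
lemma wxi_ne_zero {ξ : Fin 3 → ℝ} {w : Fin 3 → ℂ} (hw0 : w ≠ 0)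
    (hs : (ξ 0 : ℂ) ^ 2 + (ξ 1 : ℂ) ^ 2 + (ξ 2 : ℂ) ^ 2 ≠ 0)
    (horth : (ξ 0 : ℂ) * w 0 + (ξ 1 : ℂ) * w 1 + (ξ 2 : ℂ) * w 2 = 0) :
    (fun k l => w k * (ξ l : ℂ) + (ξ k : ℂ) * w l : Tens2) ≠ 0 := by
  intro h
  apply hw0
  funext i
  have h0 := congrFun (congrFun h i) 0
  have h1 := congrFun (congrFun h i) 1
  have h2 := congrFun (congrFun h i) 2
  simp only [Pi.zero_apply] at h0 h1 h2
  have key : w i * ((ξ 0 : ℂ) ^ 2 + (ξ 1 : ℂ) ^ 2 + (ξ 2 : ℂ) ^ 2) = 0 := by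
    linear_combination (ξ 0 : ℂ) * h0 + (ξ 1 : ℂ) * h1 + (ξ 2 : ℂ) * h2 - (ξ i : ℂ) * horth
  exact (mul_eq_zero.1 key).resolve_right hs

/-- `w ⊗ w` is nonzero. -/
lemma ww_ne_zero {w : Fin 3 → ℂ} (hw0 : w ≠ 0) :
    (fun k l => w k * w l : Tens2) ≠ 0 := by
  obtain ⟨a, ha⟩ := Function.ne_iff.1 hw0
  simp only [Pi.zero_apply] at ha
  intro h
  have := congrFun (congrFun h a) a
  simp only [Pi.zero_apply] at this
  exact mul_ne_zero ha ha this

set_option maxHeartbeats 1000000 in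
/-- The five kernel tensors are linearly independent. -/
lemma indep5 (ξ : Fin 3 → ℝ)
    (hs : (ξ 0 : ℂ) ^ 2 + (ξ 1 : ℂ) ^ 2 + (ξ 2 : ℂ) ^ 2 ≠ 0) :
    LinearIndependent ℂ
      ![(fun k l => kd k 0 * kd l 1 - kd k 1 * kd l 0 : Tens2),
        (fun k l => kd k 0 * kd l 2 - kd k 2 * kd l 0 : Tens2),
        (fun k l => kd k 1 * kd l 2 - kd k 2 * kd l 1 : Tens2),
        (fun k l => kd k l : Tens2),
        (fun k l => (ξ k : ℂ) * (ξ l : ℂ) : Tens2)] := by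
  rw [Fintype.linearIndependent_iff]
  intro g hg
  have hE : ∀ k l : Fin 3,
      g 0 * (kd k 0 * kd l 1 - kd k 1 * kd l 0)
      + g 1 * (kd k 0 * kd l 2 - kd k 2 * kd l 0)
      + g 2 * (kd k 1 * kd l 2 - kd k 2 * kd l 1)
      + g 3 * kd k l + g 4 * ((ξ k : ℂ) * (ξ l : ℂ)) = 0 := by
    intro k l
    have h := congrFun (congrFun hg k) l
    simpa [Fin.sum_univ_five] using h
  have h00 := hE 0 0; have h11 := hE 1 1; have h22 := hE 2 2
  have h01 := hE 0 1; have h10 := hE 1 0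
  have h02 := hE 0 2; have h20 := hE 2 0
  have h12 := hE 1 2; have h21 := hE 2 1
  simp only [kd_00, kd_01, kd_02, kd_10, kd_11, kd_12, kd_20, kd_21, kd_22] at h00 h11 h22 h01 h10 h02 h20 h12 h21
  have hg0 : g 0 = 0 := by linear_combination (h01 - h10) / 2
  have hg1 : g 1 = 0 := by linear_combination (h02 - h20) / 2
  have hg2 : g 2 = 0 := by linear_combination (h12 - h21) / 2
  have ho01 : g 4 * ((ξ 0 : ℂ) * (ξ 1 : ℂ)) = 0 := by linear_combination (h01 + h10) / 2
  have ho02 : g 4 * ((ξ 0 : ℂ) * (ξ 2 : ℂ)) = 0 := by linear_combination (h02 + h20) / 2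
  have ho12 : g 4 * ((ξ 1 : ℂ) * (ξ 2 : ℂ)) = 0 := by linear_combination (h12 + h21) / 2
  have hg3aux : g 3 * (2 * ((ξ 0 : ℂ) ^ 2 + (ξ 1 : ℂ) ^ 2 + (ξ 2 : ℂ) ^ 2)) = 0 := by
    linear_combination
      ((ξ 1 : ℂ) ^ 2 + (ξ 2 : ℂ) ^ 2) * h00 + ((ξ 0 : ℂ) ^ 2 + (ξ 2 : ℂ) ^ 2) * h11
      + ((ξ 0 : ℂ) ^ 2 + (ξ 1 : ℂ) ^ 2) * h22
      - 2 * (ξ 0 : ℂ) * (ξ 1 : ℂ) * ho01 - 2 * (ξ 0 : ℂ) * (ξ 2 : ℂ) * ho02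
      - 2 * (ξ 1 : ℂ) * (ξ 2 : ℂ) * ho12
  have hg3 : g 3 = 0 :=
    (mul_eq_zero.1 hg3aux).resolve_right (by
      intro h
      exact hs (by linear_combination h / 2))
  have hg4aux : g 4 * ((ξ 0 : ℂ) ^ 2 + (ξ 1 : ℂ) ^ 2 + (ξ 2 : ℂ) ^ 2) = 0 := by
    linear_combination h00 + h11 + h22 - 3 * hg3
  have hg4 : g 4 = 0 := (mul_eq_zero.1 hg4aux).resolve_right hs
  intro i
  rcases fin5cases i with rfl|rfl|rfl|rfl|rfl <;> assumption

set_option maxHeartbeats 2000000 in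
/-- For a nonzero covector `ξ`, the linear map
`E_{kl} ↦ i ξ_m ε^{m(l}{}_{(i} δ_{j)}{}^{k)} E_{kl}` on complex (0,2)-tensors is
diagonalizable with eigenvalues `0, ±|ξ|/2, ±|ξ|`; the eigenvalue `0` has a
5-dimensional eigenspace, each of `±|ξ|/2, ±|ξ|` has a 1-dimensional eigenspace. -/
theorem stmt_13 (ξ : Fin 3 → ℝ) (hξ : ξ ≠ 0)
    (A : Module.End ℂ Tens2)
    (hA : ∀ (E : Tens2) (i j : Fin 3), A E i j =
      Complex.I * ∑ m, ∑ k, ∑ l, (ξ m : ℂ) * ((1/4) *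
        (eps3 m l i * kd j k + eps3 m k i * kd j l
          + eps3 m l j * kd i k + eps3 m k j * kd i l)) * E k l) :
    (⨆ μ : ℂ, Module.End.eigenspace A μ) = ⊤
    ∧ (∀ c : ℂ, Module.End.HasEigenvalue A c ↔
        (c = 0 ∨ c = (Real.sqrt (∑ i, ξ i * ξ i) : ℂ) / 2
          ∨ c = -((Real.sqrt (∑ i, ξ i * ξ i) : ℂ) / 2)
          ∨ c = (Real.sqrt (∑ i, ξ i * ξ i) : ℂ)
          ∨ c = -(Real.sqrt (∑ i, ξ i * ξ i) : ℂ)))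
    ∧ Module.finrank ℂ (Module.End.eigenspace A 0) = 5
    ∧ Module.finrank ℂ (Module.End.eigenspace A ((Real.sqrt (∑ i, ξ i * ξ i) : ℂ) / 2)) = 1
    ∧ Module.finrank ℂ (Module.End.eigenspace A (-((Real.sqrt (∑ i, ξ i * ξ i) : ℂ) / 2))) = 1
    ∧ Module.finrank ℂ (Module.End.eigenspace A ((Real.sqrt (∑ i, ξ i * ξ i) : ℂ))) = 1
    ∧ Module.finrank ℂ (Module.End.eigenspace A (-(Real.sqrt (∑ i, ξ i * ξ i) : ℂ))) = 1 := by
  classical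
  have hA' := Aform ξ A hA
  have hsum_pos : 0 < ∑ i, ξ i * ξ i := by
    obtain ⟨i, hi⟩ := Function.ne_iff.1 hξ
    exact Finset.sum_pos' (fun j _ => mul_self_nonneg _)
      ⟨i, Finset.mem_univ i, mul_self_pos.2 hi⟩
  set c : ℂ := ((Real.sqrt (∑ i, ξ i * ξ i) : ℝ) : ℂ) with hcdef
  have hcre : (0:ℝ) < Real.sqrt (∑ i, ξ i * ξ i) := Real.sqrt_pos.2 hsum_pos
  have hc0 : c ≠ 0 := by
    rw [hcdef]; exact_mod_cast hcre.ne'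
  have hc2 : c ^ 2 = (ξ 0 : ℂ) ^ 2 + (ξ 1 : ℂ) ^ 2 + (ξ 2 : ℂ) ^ 2 := by
    rw [hcdef]
    have h1 : ((Real.sqrt (∑ i, ξ i * ξ i) : ℝ) : ℂ) ^ 2
        = (((Real.sqrt (∑ i, ξ i * ξ i)) ^ 2 : ℝ) : ℂ) := by push_cast; ring
    rw [h1, Real.sq_sqrt hsum_pos.le]
    push_cast [Fin.sum_univ_three]
    ring
  have hs' : (ξ 0 : ℂ) ^ 2 + (ξ 1 : ℂ) ^ 2 + (ξ 2 : ℂ) ^ 2 ≠ 0 := by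
    rw [← hc2]; exact pow_ne_zero 2 hc0
  have hc2m : (-c) ^ 2 = (ξ 0 : ℂ) ^ 2 + (ξ 1 : ℂ) ^ 2 + (ξ 2 : ℂ) ^ 2 := by
    linear_combination hc2
  obtain ⟨wp, hwp0, hwp⟩ := exists_eigvec ξ c hc2
  obtain ⟨wm, hwm0, hwm⟩ := exists_eigvec ξ (-c) hc2m
  -- eigenrelations
  have hSm := eig_ww hA' hwp
  have hTm := eig_wxi hA' hwp
  have hSp := eig_ww hA' hwm
  have hTp := eig_wxi hA' hwm
  rw [neg_neg] at hSp
  rw [show (-(-c / 2) : ℂ) = c / 2 by ring] at hTp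
  -- memberships
  have memSm : (fun k l => wp k * wp l : Tens2) ∈ Module.End.eigenspace A (-c) :=
    Module.End.mem_eigenspace_iff.2 hSm
  have memSp : (fun k l => wm k * wm l : Tens2) ∈ Module.End.eigenspace A c :=
    Module.End.mem_eigenspace_iff.2 hSp
  have memTm : (fun k l => wp k * (ξ l : ℂ) + (ξ k : ℂ) * wp l : Tens2)
      ∈ Module.End.eigenspace A (-(c / 2)) :=
    Module.End.mem_eigenspace_iff.2 hTm
  have memTp : (fun k l => wm k * (ξ l : ℂ) + (ξ k : ℂ) * wm l : Tens2)
      ∈ Module.End.eigenspace A (c / 2) :=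
    Module.End.mem_eigenspace_iff.2 hTp
  have mem01 : (fun k l => kd k 0 * kd l 1 - kd k 1 * kd l 0 : Tens2)
      ∈ Module.End.eigenspace A 0 :=
    Module.End.mem_eigenspace_iff.2 ((eig_asym hA' 0 1).trans (zero_smul ℂ _).symm)
  have mem02 : (fun k l => kd k 0 * kd l 2 - kd k 2 * kd l 0 : Tens2)
      ∈ Module.End.eigenspace A 0 :=
    Module.End.mem_eigenspace_iff.2 ((eig_asym hA' 0 2).trans (zero_smul ℂ _).symm)
  have mem12 : (fun k l => kd k 1 * kd l 2 - kd k 2 * kd l 1 : Tens2)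
      ∈ Module.End.eigenspace A 0 :=
    Module.End.mem_eigenspace_iff.2 ((eig_asym hA' 1 2).trans (zero_smul ℂ _).symm)
  have memId : (fun k l => kd k l : Tens2) ∈ Module.End.eigenspace A 0 :=
    Module.End.mem_eigenspace_iff.2 ((eig_id hA').trans (zero_smul ℂ _).symm)
  have memX2 : (fun k l => (ξ k : ℂ) * (ξ l : ℂ) : Tens2) ∈ Module.End.eigenspace A 0 :=
    Module.End.mem_eigenspace_iff.2 ((eig_xixi hA').trans (zero_smul ℂ _).symm)
  -- nonvanishing
  have hSmne : (fun k l => wp k * wp l : Tens2) ≠ 0 := ww_ne_zero hwp0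
  have hSpne : (fun k l => wm k * wm l : Tens2) ≠ 0 := ww_ne_zero hwm0
  have hTmne : (fun k l => wp k * (ξ l : ℂ) + (ξ k : ℂ) * wp l : Tens2) ≠ 0 :=
    wxi_ne_zero hwp0 hs' (eig_orth hc0 hwp)
  have hTpne : (fun k l => wm k * (ξ l : ℂ) + (ξ k : ℂ) * wm l : Tens2) ≠ 0 :=
    wxi_ne_zero hwm0 hs' (eig_orth (neg_ne_zero.2 hc0) hwm)
  have hF01ne : (fun k l => kd k 0 * kd l 1 - kd k 1 * kd l 0 : Tens2) ≠ 0 := by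
    intro h
    have := congrFun (congrFun h 0) 1
    simp [kd_00, kd_01, kd_10, kd_11] at this
  -- dimension of the ambient space
  have hdim : Module.finrank ℂ Tens2 = 9 := by
    simp [Module.finrank_pi_fintype, Module.finrank_pi]
  -- independence of eigenspaces
  have hIndep := Module.End.eigenspaces_iSupIndep A
  have key : ∀ (a : ℂ) (Y : Set ℂ), a ∉ Y →
      Disjoint (Module.End.eigenspace A a) (⨆ i ∈ Y, Module.End.eigenspace A i) :=
    fun a Y ha => hIndep.disjoint_biSup ha
  -- pairwise distinctness facts
  have ne1 : c ≠ -c := fun h => hc0 (by linear_combination h / 2)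
  have ne2 : c / 2 ≠ c := fun h => hc0 (by linear_combination -2 * h)
  have ne3 : c / 2 ≠ -c := fun h => hc0 (by linear_combination 2 / 3 * h)
  have ne4 : -(c / 2) ≠ c := fun h => hc0 (by linear_combination -2 / 3 * h)
  have ne5 : -(c / 2) ≠ -c := fun h => hc0 (by linear_combination 2 * h)
  have ne6 : -(c / 2) ≠ c / 2 := fun h => hc0 (by linear_combination -1 * h)
  have ne7 : (0 : ℂ) ≠ c := fun h => hc0 h.symm
  have ne8 : (0 : ℂ) ≠ -c := fun h => hc0 (by linear_combination h)
  have ne9 : (0 : ℂ) ≠ c / 2 := fun h => hc0 (by linear_combination -2 * h)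
  have ne10 : (0 : ℂ) ≠ -(c / 2) := fun h => hc0 (by linear_combination 2 * h)
  -- disjointness along the chain
  have D1 : Disjoint (Module.End.eigenspace A c) (Module.End.eigenspace A (-c)) := by
    have h := key c {-c} (by simp [ne1])
    simpa using h
  have D2 : Disjoint (Module.End.eigenspace A (c / 2))
      (Module.End.eigenspace A c ⊔ Module.End.eigenspace A (-c)) := by
    refine (key (c / 2) {c, -c} (by simp [ne2, ne3])).mono_right ?_
    exact sup_le (le_biSup _ (by simp)) (le_biSup _ (by simp))
  have D3 : Disjoint (Module.End.eigenspace A (-(c / 2)))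
      ((Module.End.eigenspace A c ⊔ Module.End.eigenspace A (-c))
        ⊔ Module.End.eigenspace A (c / 2)) := by
    refine (key (-(c / 2)) {c, -c, c / 2} (by simp [ne4, ne5, ne6])).mono_right ?_
    exact sup_le (sup_le (le_biSup _ (by simp)) (le_biSup _ (by simp))) (le_biSup _ (by simp))
  have D4 : Disjoint (Module.End.eigenspace A 0)
      (((Module.End.eigenspace A c ⊔ Module.End.eigenspace A (-c))
        ⊔ Module.End.eigenspace A (c / 2)) ⊔ Module.End.eigenspace A (-(c / 2))) := by
    refine (key 0 {c, -c, c / 2, -(c / 2)} (by simp [ne7, ne8, ne9, ne10])).mono_right ?_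
    exact sup_le (sup_le (sup_le (le_biSup _ (by simp)) (le_biSup _ (by simp)))
      (le_biSup _ (by simp))) (le_biSup _ (by simp))
  -- additivity of finrank for disjoint submodules
  have fr : ∀ P Q : Submodule ℂ Tens2, Disjoint P Q →
      Module.finrank ℂ (P ⊔ Q : Submodule ℂ Tens2)
        = Module.finrank ℂ P + Module.finrank ℂ Q := by
    intro P Q hD
    have h := Submodule.finrank_sup_add_finrank_inf_eq P Q
    rw [hD.eq_bot, finrank_bot] at h
    omega
  -- lower bounds
  have rank1 : ∀ (μ : ℂ) (v : Tens2), v ∈ Module.End.eigenspace A μ → v ≠ 0 →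
      1 ≤ Module.finrank ℂ (Module.End.eigenspace A μ) := by
    intro μ v hv hv0
    rw [Nat.one_le_iff_ne_zero]
    intro h
    rw [Submodule.finrank_eq_zero] at h
    rw [h, Submodule.mem_bot] at hv
    exact hv0 hv
  have ge5 : 5 ≤ Module.finrank ℂ (Module.End.eigenspace A 0) := by
    have hind := indep5 ξ hs'
    have hsp : Submodule.span ℂ (Set.range
        ![(fun k l => kd k 0 * kd l 1 - kd k 1 * kd l 0 : Tens2),
          (fun k l => kd k 0 * kd l 2 - kd k 2 * kd l 0 : Tens2),
          (fun k l => kd k 1 * kd l 2 - kd k 2 * kd l 1 : Tens2),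
          (fun k l => kd k l : Tens2),
          (fun k l => (ξ k : ℂ) * (ξ l : ℂ) : Tens2)]) ≤ Module.End.eigenspace A 0 := by
      rw [Submodule.span_le]
      rintro x ⟨i, rfl⟩
      rcases fin5cases i with rfl|rfl|rfl|rfl|rfl <;> simpa using
        (by first
          | exact mem01 | exact mem02 | exact mem12 | exact memId | exact memX2 :
            _ ∈ Module.End.eigenspace A 0)
    calc (5:ℕ) = Module.finrank ℂ (Submodule.span ℂ (Set.range
        ![(fun k l => kd k 0 * kd l 1 - kd k 1 * kd l 0 : Tens2),
          (fun k l => kd k 0 * kd l 2 - kd k 2 * kd l 0 : Tens2),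
          (fun k l => kd k 1 * kd l 2 - kd k 2 * kd l 1 : Tens2),
          (fun k l => kd k l : Tens2),
          (fun k l => (ξ k : ℂ) * (ξ l : ℂ) : Tens2)])) := by
          rw [finrank_span_eq_card hind]; simp
      _ ≤ _ := Submodule.finrank_mono hsp
  have geSp : 1 ≤ Module.finrank ℂ (Module.End.eigenspace A c) := rank1 _ _ memSp hSpne
  have geSm : 1 ≤ Module.finrank ℂ (Module.End.eigenspace A (-c)) := rank1 _ _ memSm hSmne
  have geTp : 1 ≤ Module.finrank ℂ (Module.End.eigenspace A (c / 2)) := rank1 _ _ memTp hTpne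
  have geTm : 1 ≤ Module.finrank ℂ (Module.End.eigenspace A (-(c / 2))) :=
    rank1 _ _ memTm hTmne
  -- the chain of sups
  have e1 := fr _ _ D1
  have e2 := fr _ _ D2.symm
  have e3 := fr _ _ D3.symm
  have e4 := fr _ _ D4.symm
  rw [e1] at e2; rw [e2] at e3; rw [e3] at e4
  have hle9 : Module.finrank ℂ
      (((((Module.End.eigenspace A c ⊔ Module.End.eigenspace A (-c))
        ⊔ Module.End.eigenspace A (c / 2)) ⊔ Module.End.eigenspace A (-(c / 2)))
        ⊔ Module.End.eigenspace A 0 : Submodule ℂ Tens2)) ≤ 9 := by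
    rw [← hdim]; exact Submodule.finrank_le _
  rw [e4] at hle9
  -- pin down all dimensions
  have d0 : Module.finrank ℂ (Module.End.eigenspace A 0) = 5 := by omega
  have dSp : Module.finrank ℂ (Module.End.eigenspace A c) = 1 := by omega
  have dSm : Module.finrank ℂ (Module.End.eigenspace A (-c)) = 1 := by omega
  have dTp : Module.finrank ℂ (Module.End.eigenspace A (c / 2)) = 1 := by omega
  have dTm : Module.finrank ℂ (Module.End.eigenspace A (-(c / 2))) = 1 := by omega
  -- the big sup is everything
  have hS4top : (((Module.End.eigenspace A c ⊔ Module.End.eigenspace A (-c))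
        ⊔ Module.End.eigenspace A (c / 2)) ⊔ Module.End.eigenspace A (-(c / 2)))
        ⊔ Module.End.eigenspace A 0 = ⊤ := by
    apply Submodule.eq_top_of_finrank_eq
    rw [e4, hdim]
    omega
  refine ⟨?_, ?_, d0, dTp, dTm, dSp, dSm⟩
  · rw [eq_top_iff, ← hS4top]
    exact sup_le (sup_le (sup_le (sup_le (le_iSup _ _) (le_iSup _ _)) (le_iSup _ _))
      (le_iSup _ _)) (le_iSup _ _)
  · intro z
    constructor
    · intro hz
      by_contra hnot
      push_neg at hnot
      obtain ⟨hz0, hz1, hz2, hz3, hz4⟩ := hnot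
      have htop : (⨆ i ∈ ({0, c / 2, -(c / 2), c, -c} : Set ℂ),
          Module.End.eigenspace A i) = ⊤ := by
        rw [eq_top_iff, ← hS4top]
        exact sup_le (sup_le (sup_le (sup_le (le_biSup _ (by simp)) (le_biSup _ (by simp)))
          (le_biSup _ (by simp))) (le_biSup _ (by simp))) (le_biSup _ (by simp))
      have hd := key z {0, c / 2, -(c / 2), c, -c} (by simp [hz0, hz1, hz2, hz3, hz4])
      rw [htop] at hd
      exact Module.End.hasEigenvalue_iff.1 hz (disjoint_top.1 hd)
    · rintro (rfl|rfl|rfl|rfl|rfl)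
      · exact Module.End.hasEigenvalue_of_hasEigenvector ⟨mem01, hF01ne⟩
      · exact Module.End.hasEigenvalue_of_hasEigenvector ⟨memTp, hTpne⟩
      · exact Module.End.hasEigenvalue_of_hasEigenvector ⟨memTm, hTmne⟩
      · exact Module.End.hasEigenvalue_of_hasEigenvector ⟨memSp, hSpne⟩
      · exact Module.End.hasEigenvalue_of_hasEigenvector ⟨memSm, hSmne⟩
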